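/- Suppose the equation x'(t) = L(t)x_t is shadowable and let 𝒰(s) = T(s,0)𝒰, where C = 𝒮(0) ⊕ 𝒰. Then for every t ≥ s ≥ 0, the restriction T(t,s)|_{𝒰(s)} : 𝒰(s) → 𝒰(t) is a linear bijection. -/

import Mathlib

open Set

noncomputable section

/-- The Euclidean state space ℝ^d. -/
abbrev Rd (d : ℕ) : Type := EuclideanSpace ℝ (Fin d)

/-- The phase space C = C([-r,0], ℝ^d) with the supremum norm. -/
abbrev Ph (d : ℕ) (r : ℝ) : Type := C(Set.Icc (-r) (0:ℝ), Rd d)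

/-- The segment x_t ∈ C of a continuous function x : ℝ → ℝ^d, x_t(θ) = x(t+θ). -/
def seg (d : ℕ) (r : ℝ) (x : ℝ → Rd d) (hx : Continuous x) (t : ℝ) : Ph d r :=
  ⟨fun θ => x (t + θ.1), hx.comp (continuous_const.add continuous_subtype_val)⟩

/-- `x` is a solution of x'(t) = L(t)x_t on [s, ∞) (right-hand derivative at s). -/
def IsSol (d : ℕ) (r : ℝ) (L : ℝ → (Ph d r →L[ℝ] Rd d)) (s : ℝ)
    (x : ℝ → Rd d) (hx : Continuous x) : Prop :=
  ∀ t, s ≤ t → HasDerivWithinAt x (L t (seg d r x hx t)) (Set.Ici s) t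

/-- `T` is the solution operator family of x'(t) = L(t)x_t :
for every s ≥ 0 and φ ∈ C there is a solution x on [s,∞) with x_s = φ and x_t = T(t,s)φ. -/
def IsSolOp (d : ℕ) (r : ℝ) (L : ℝ → (Ph d r →L[ℝ] Rd d))
    (T : ℝ → ℝ → (Ph d r →L[ℝ] Ph d r)) : Prop :=
  ∀ s, 0 ≤ s → ∀ φ : Ph d r, ∃ (x : ℝ → Rd d) (hx : Continuous x),
    IsSol d r L s x hx ∧ seg d r x hx s = φ ∧ ∀ t, s ≤ t → seg d r x hx t = T t s φ

/-- The evolution family property of the solution operators. -/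
def Cocycle (d : ℕ) (r : ℝ) (T : ℝ → ℝ → (Ph d r →L[ℝ] Ph d r)) : Prop :=
  (∀ s, 0 ≤ s → T s s = ContinuousLinearMap.id ℝ (Ph d r)) ∧
  ∀ τ t s, 0 ≤ s → s ≤ t → t ≤ τ → T τ s = (T τ t).comp (T t s)

/-- Uniqueness of solutions with a given initial segment at time s. -/
def UniqueSol (d : ℕ) (r : ℝ) (L : ℝ → (Ph d r →L[ℝ] Rd d)) : Prop :=
  ∀ s, 0 ≤ s → ∀ (x y : ℝ → Rd d) (hx : Continuous x) (hy : Continuous y),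
    IsSol d r L s x hx → IsSol d r L s y hy → seg d r x hx s = seg d r y hy s →
    ∀ t, s - r ≤ t → x t = y t

/-- Eq. x'(t) = L(t)x_t is shadowable. -/
def Shadowable (d : ℕ) (r : ℝ) (L : ℝ → (Ph d r →L[ℝ] Rd d)) : Prop :=
  ∀ ε, 0 < ε → ∃ δ, 0 < δ ∧ ∀ (y yd : ℝ → Rd d) (hy : Continuous y),
    ContinuousOn yd (Set.Ici 0) →
    (∀ t, 0 ≤ t → HasDerivWithinAt y (yd t) (Set.Ici 0) t) →
    (∀ t, 0 ≤ t → ‖yd t - L t (seg d r y hy t)‖ ≤ δ) →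
    ∃ (x : ℝ → Rd d) (hx : Continuous x), IsSol d r L 0 x hx ∧
      ∀ t, 0 ≤ t → ‖seg d r x hx t - seg d r y hy t‖ ≤ ε

/-- Eq. x'(t) = L(t)x_t is Hyers–Ulam stable. -/
def HyersUlam (d : ℕ) (r : ℝ) (L : ℝ → (Ph d r →L[ℝ] Rd d)) : Prop :=
  ∃ κ, 0 < κ ∧ ∀ δ, 0 < δ → ∀ (y yd : ℝ → Rd d) (hy : Continuous y),
    ContinuousOn yd (Set.Ici 0) →
    (∀ t, 0 ≤ t → HasDerivWithinAt y (yd t) (Set.Ici 0) t) →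
    (∀ t, 0 ≤ t → ‖yd t - L t (seg d r y hy t)‖ ≤ δ) →
    ∃ (x : ℝ → Rd d) (hx : Continuous x), IsSol d r L 0 x hx ∧
      ∀ t, 0 ≤ t → ‖seg d r x hx t - seg d r y hy t‖ ≤ κ * δ

/-- The stable subspace 𝒮(s) = {φ ∈ C : sup_{t ≥ s} ‖T(t,s)φ‖ < ∞}. -/
def stableSub (d : ℕ) (r : ℝ) (T : ℝ → ℝ → (Ph d r →L[ℝ] Ph d r)) (s : ℝ) :
    Submodule ℝ (Ph d r) where
  carrier := {φ | ∃ M, ∀ t, s ≤ t → ‖T t s φ‖ ≤ M}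
  add_mem' := by
    rintro a b ⟨Ma, hMa⟩ ⟨Mb, hMb⟩
    refine ⟨Ma + Mb, fun t ht => ?_⟩
    calc ‖T t s (a + b)‖ = ‖T t s a + T t s b‖ := by rw [map_add]
    _ ≤ ‖T t s a‖ + ‖T t s b‖ := norm_add_le _ _
    _ ≤ Ma + Mb := add_le_add (hMa t ht) (hMb t ht)
  zero_mem' := ⟨0, fun t ht => by simp⟩
  smul_mem' := by
    rintro c a ⟨Ma, hMa⟩
    refine ⟨‖c‖ * Ma, fun t ht => ?_⟩
    rw [map_smul]
    have h1 : ‖c • (T t s) a‖ = ‖c‖ * ‖(T t s) a‖ := @norm_smul ℝ (Ph d r) _ _ _ _ c _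
    rw [h1]
    exact mul_le_mul_of_nonneg_left (hMa t ht) (norm_nonneg c)

/-- Eq. x'(t) = L(t)x_t admits an exponential dichotomy (with solution operators T). -/
def ExpDich (d : ℕ) (r : ℝ) (T : ℝ → ℝ → (Ph d r →L[ℝ] Ph d r)) : Prop :=
  ∃ (P : ℝ → (Ph d r →L[ℝ] Ph d r)) (D lam : ℝ), 0 < D ∧ 0 < lam ∧
    (∀ t, 0 ≤ t → (P t).comp (P t) = P t) ∧
    (∀ t s, 0 ≤ s → s ≤ t → (P t).comp (T t s) = (T t s).comp (P s)) ∧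
    (∀ t s, 0 ≤ s → s ≤ t →
      Set.BijOn (⇑(T t s)) (LinearMap.ker (P s : Ph d r →ₗ[ℝ] Ph d r) : Set (Ph d r))
        (LinearMap.ker (P t : Ph d r →ₗ[ℝ] Ph d r) : Set (Ph d r))) ∧
    (∀ t s, 0 ≤ s → s ≤ t → ‖(T t s).comp (P s)‖ ≤ D * Real.exp (-lam * (t - s))) ∧
    (∀ t s, 0 ≤ t → t ≤ s → ∀ φ ∈ LinearMap.ker (P t : Ph d r →ₗ[ℝ] Ph d r),
      ‖φ‖ ≤ D * Real.exp (-lam * (s - t)) * ‖T s t φ‖)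

/-- If Eq. x'(t) = L(t)x_t is shadowable and 𝒰(s) = T(s,0)𝒰 where
C = 𝒮(0) ⊕ 𝒰, then T(t,s) restricts to a bijection of 𝒰(s) onto 𝒰(t)
for t ≥ s ≥ 0. -/
theorem stmt9 (d : ℕ) (r : ℝ) (hr : 0 ≤ r)
    (L : ℝ → (Ph d r →L[ℝ] Rd d)) (hL : ContinuousOn L (Set.Ici 0))
    (T : ℝ → ℝ → (Ph d r →L[ℝ] Ph d r))
    (hT : IsSolOp d r L T) (hcoc : Cocycle d r T)
    (huniq : UniqueSol d r L)
    (hsh : Shadowable d r L)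
    (U : Submodule ℝ (Ph d r)) (hUfd : FiniteDimensional ℝ ↥U)
    (hUcompl : IsCompl (stableSub d r T 0) U) :
    ∀ t s, 0 ≤ s → s ≤ t →
      Set.BijOn (⇑(T t s)) ((U.map (T s 0 : Ph d r →ₗ[ℝ] Ph d r) : Submodule ℝ (Ph d r)) : Set (Ph d r))
        ((U.map (T t 0 : Ph d r →ₗ[ℝ] Ph d r) : Submodule ℝ (Ph d r)) : Set (Ph d r)) := by
  -- Key: if w ∈ U and T t 0 w = 0 for some t ≥ 0, then w = 0.
  have key : ∀ t, 0 ≤ t → ∀ w ∈ U, T t 0 w = 0 → w = 0 := by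
    intro t ht w hwU hw0
    -- show w is bounded, i.e. w ∈ stableSub
    have hwS : w ∈ stableSub d r T 0 := by
      obtain ⟨x, hx, hsol, hseg0, hsegT⟩ := hT 0 le_rfl w
      obtain ⟨M, hM⟩ := (isCompact_Icc (a := -r) (b := t)).exists_bound_of_continuousOn
        hx.continuousOn
      refine ⟨max M 0, fun τ hτ => ?_⟩
      rcases le_total τ t with hτt | htτ
      · rw [← hsegT τ hτ]
        refine ContinuousMap.norm_le _ (le_max_right _ _) |>.2 fun θ => ?_
        have : τ + θ.1 ∈ Set.Icc (-r) t := by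
          obtain ⟨hθ1, hθ2⟩ := θ.2
          constructor <;> nlinarith
        exact le_trans (hM _ this) (le_max_left _ _)
      · have : T τ 0 = (T τ t).comp (T t 0) := hcoc.2 τ t 0 le_rfl ht htτ
        rw [this]
        simp [hw0, le_max_right M 0]
    have := hUcompl.disjoint
    rw [Submodule.disjoint_def] at this
    exact this w hwS hwU
  intro t s hs hst
  have hcomp : T t 0 = (T t s).comp (T s 0) := hcoc.2 t s 0 le_rfl hs hst
  refine ⟨?_, ?_, ?_⟩
  · rintro a ⟨u, huU, rfl⟩
    exact ⟨u, huU, by rw [hcomp]; rfl⟩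
  · rintro a ⟨u, huU, rfl⟩ b ⟨v, hvU, rfl⟩ hab
    have h0 : T t 0 (u - v) = 0 := by
      rw [hcomp]
      simp only [ContinuousLinearMap.comp_apply, map_sub]
      exact sub_eq_zero.mpr hab
    have := key t (le_trans hs hst) (u - v) (U.sub_mem huU hvU) h0
    have huv : u = v := by rwa [sub_eq_zero] at this
    rw [huv]
  · rintro b ⟨u, huU, rfl⟩
    exact ⟨T s 0 u, ⟨u, huU, rfl⟩, by rw [hcomp]; rfl⟩

end
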